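/- arXiv:2009.10961 — 2 statements merged into one kernel-verified Lean document; each statement's English description precedes it below -/
import Mathlib

section
/- Let (P,Q) ∈ Gr_𝒟 and let Ψ be the unique solution of P·Ψ = 0 with Ψ ∈ 1 + z⁻¹ℂ[[z⁻¹]]. Then: (i) for every k ≥ 0, the series Q^k·Ψ − z^k has degree ≤ k−1 (so {Q^k·Ψ} is a distinguished basis with leading terms z^k); (ii) the subspace W := span_ℂ{Q^k·Ψ : k ≥ 0} belongs to the big cell of the Sato Grassmannian; and (iii) P(W) ⊆ W and Q(W) ⊆ W. -/
noncomputable section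

/-- `H = ℂ((z⁻¹))`: formal Laurent series in `u = z⁻¹`. -/
abbrev H : Type := LaurentSeries ℂ

/-- The coefficient of `z^k` of a Laurent series in `z⁻¹`. -/
def zc (f : H) (k : ℤ) : ℂ := f.coeff (-k)

/-- `deg_z f ≤ d`: all coefficients of `z^k` with `k > d` vanish. -/
def degLE (f : H) (d : ℤ) : Prop := ∀ k : ℤ, d < k → zc f k = 0

/-- The element `z` of `H`. -/
def zH : H := HahnSeries.single (-1 : ℤ) (1 : ℂ)

/-- Multiplication by `z` as a `ℂ`-linear endomorphism of `H`. -/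
def Mz : H →ₗ[ℂ] H where
  toFun f := zH * f
  map_add' f g := mul_add zH f g
  map_smul' c f := by
    simp only [RingHom.id_apply, ← HahnSeries.single_zero_mul_eq_smul]
    ring

/-- The derivative `d/dz` as a `ℂ`-linear endomorphism of `H`. -/
def Dz : H →ₗ[ℂ] H where
  toFun f :=
    { coeff := fun n => ((1 - n : ℤ) : ℂ) * f.coeff (n - 1)
      isPWO_support' := by
        refine Set.IsPWO.mono (Set.IsPWO.image_of_monotone f.isPWO_support'
          (f := fun m : ℤ => m + 1) (fun a b hab => by dsimp only; omega)) ?_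
        intro n hn
        simp only [Function.mem_support] at hn
        refine ⟨n - 1, ?_, by ring⟩
        intro h
        exact hn (by rw [h, mul_zero]) }
  map_add' f g := by
    ext n
    simp [HahnSeries.coeff_add, mul_add]
  map_smul' c f := by
    ext n
    simp [HahnSeries.coeff_smul]
    ring

/-- `H₊ = ℂ[z]`: series with no negative powers of `z`. -/
def Hplus : Submodule ℂ H where
  carrier := {f | ∀ k : ℤ, k < 0 → zc f k = 0}
  add_mem' := by
    intro f g hf hg k hk
    simp only [Set.mem_setOf_eq, zc, HahnSeries.coeff_add] at *
    rw [hf k hk, hg k hk, add_zero]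
  zero_mem' := by intro k hk; simp [zc]
  smul_mem' := by
    intro c f hf k hk
    simp only [Set.mem_setOf_eq, zc, HahnSeries.coeff_smul] at *
    rw [hf k hk, smul_zero]

/-- `H₋ = z⁻¹ℂ[[z⁻¹]]`: series with only negative powers of `z`. -/
def Hminus : Submodule ℂ H where
  carrier := {f | ∀ k : ℤ, 0 ≤ k → zc f k = 0}
  add_mem' := by
    intro f g hf hg k hk
    simp only [Set.mem_setOf_eq, zc, HahnSeries.coeff_add] at *
    rw [hf k hk, hg k hk, add_zero]
  zero_mem' := by intro k hk; simp [zc]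
  smul_mem' := by
    intro c f hf k hk
    simp only [Set.mem_setOf_eq, zc, HahnSeries.coeff_smul] at *
    rw [hf k hk, smul_zero]

/-- The projection `π₊ : H → H₊` discarding all negative powers of `z`. -/
def piPlus : H →ₗ[ℂ] H where
  toFun f :=
    { coeff := fun n => if 0 < n then 0 else f.coeff n
      isPWO_support' := by
        refine Set.IsPWO.mono f.isPWO_support' ?_
        intro n hn
        simp only [Function.mem_support] at hn
        by_cases h : 0 < n
        · exact absurd (if_pos h) hn
        · rw [if_neg h] at hn; exact hn }
  map_add' f g := by
    ext n
    by_cases h : 0 < n <;> simp [HahnSeries.coeff_add, h]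
  map_smul' c f := by
    ext n
    by_cases h : 0 < n <;> simp [HahnSeries.coeff_smul, h]

/-- The statement that `A` is the operator `Σ_{k≥0} a_k (d/dz)^k`, where all
`deg a_k ≤ e`: partial sums converge to `A f` coefficientwise. -/
def IsOp (a : ℕ → H) (e : ℤ) (A : H →ₗ[ℂ] H) : Prop :=
  (∀ k, degLE (a k) e) ∧
  ∀ (f : H) (d : ℤ), degLE f d → ∀ N : ℕ,
    degLE (A f - ∑ k ∈ Finset.range N, a k * ((Dz ^ k) f)) (d + e - N)

/-- The operator `A` stabilizes the subspace `W`. -/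
def Stab (A : H →ₗ[ℂ] H) (W : Submodule ℂ H) : Prop := ∀ f ∈ W, A f ∈ W

/-- The big cell of the Sato Grassmannian: `π₊` restricts to a bijection of `W` onto `ℂ[z]`. -/
def BigCell (W : Submodule ℂ H) : Prop :=
  Set.BijOn piPlus (W : Set H) (Hplus : Set H)

/-- The pair `(P, Q)` belongs to `Gr_𝒟`. -/
def GrD (P Q : H →ₗ[ℂ] H) : Prop :=
  (∃ a : ℕ → H, IsOp a (-2) (P - Dz)) ∧
  (∃ b : ℕ → H, IsOp b (-1) (Q - Mz)) ∧
  P ∘ₗ Q - Q ∘ₗ P = LinearMap.id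


-- Auxiliary lemmas ---------------------------------------------------------

lemma mem_Hplus {f : H} : f ∈ Hplus ↔ ∀ k : ℤ, k < 0 → zc f k = 0 := Iff.rfl
lemma mem_Hminus {f : H} : f ∈ Hminus ↔ ∀ k : ℤ, 0 ≤ k → zc f k = 0 := Iff.rfl

lemma zc_add (f g : H) (k : ℤ) : zc (f + g) k = zc f k + zc g k := rfl
lemma zc_sub (f g : H) (k : ℤ) : zc (f - g) k = zc f k - zc g k := rfl
lemma zc_smul (c : ℂ) (f : H) (k : ℤ) : zc (c • f) k = c * zc f k := by
  simp [zc, HahnSeries.coeff_smul]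
lemma zc_zero (k : ℤ) : zc (0 : H) k = 0 := rfl

lemma zc_finsum {ι : Type*} (s : Finset ι) (g : ι → H) (k : ℤ) :
    zc (∑ i ∈ s, g i) k = ∑ i ∈ s, zc (g i) k := by
  classical
  induction s using Finset.cons_induction with
  | empty => simp [zc]
  | cons i s hi ih => rw [Finset.sum_cons, Finset.sum_cons, zc_add, ih]

lemma zc_zH_mul (f : H) (k : ℤ) : zc (zH * f) k = zc f (k - 1) := by
  have h : (-k : ℤ) = (-(k-1)) + (-1) := by ring
  rw [zc, zH, h, HahnSeries.coeff_single_mul_add, one_mul, zc]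

lemma zc_Dz (f : H) (k : ℤ) : zc (Dz f) k = ((k + 1 : ℤ) : ℂ) * zc f (k + 1) := by
  have h1 : (1 - (-k) : ℤ) = k + 1 := by ring
  have h2 : ((-k) - 1 : ℤ) = -(k+1) := by ring
  show ((1 - (-k) : ℤ) : ℂ) * f.coeff ((-k) - 1) = _
  rw [h1, h2, zc]

lemma degLE_mono {f : H} {d d' : ℤ} (h : degLE f d) (hdd : d ≤ d') : degLE f d' :=
  fun k hk => h k (lt_of_le_of_lt hdd hk)

lemma degLE_add {f g : H} {d : ℤ} (hf : degLE f d) (hg : degLE g d) : degLE (f + g) d := by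
  intro k hk; rw [zc_add, hf k hk, hg k hk, add_zero]

lemma degLE_smul {f : H} {d : ℤ} (c : ℂ) (hf : degLE f d) : degLE (c • f) d := by
  intro k hk; rw [zc_smul, hf k hk, mul_zero]

lemma degLE_zH_mul {f : H} {d : ℤ} (hf : degLE f d) : degLE (zH * f) (d + 1) := by
  intro k hk; rw [zc_zH_mul]; exact hf _ (by omega)

lemma zH_pow (k : ℕ) : zH ^ k = HahnSeries.single (-(k : ℤ)) (1 : ℂ) := by
  rw [zH, HahnSeries.single_pow, one_pow, nsmul_eq_mul]
  norm_num

lemma zc_zH_pow (k : ℕ) (j : ℤ) : zc (zH ^ k) j = if j = (k : ℤ) then 1 else 0 := by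
  rw [zH_pow, zc, HahnSeries.coeff_single]
  by_cases h : j = (k : ℤ)
  · rw [if_pos (by omega), if_pos h]
  · rw [if_neg (by omega), if_neg h]

lemma degLE_zH_pow (k : ℕ) : degLE (zH ^ k) (k : ℤ) := by
  intro j hj; rw [zc_zH_pow, if_neg (by omega)]

lemma zc_piPlus (f : H) (k : ℤ) : zc (piPlus f) k = if k < 0 then 0 else zc f k := by
  show (if (0:ℤ) < -k then 0 else f.coeff (-k)) = _
  by_cases h : k < 0
  · rw [if_pos (by omega), if_pos h]
  · rw [if_neg (by omega), if_neg h, zc]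

lemma piPlus_mem_Hplus (f : H) : piPlus f ∈ Hplus := by
  intro k hk; rw [zc_piPlus, if_pos hk]

lemma opBound {a : ℕ → H} {e : ℤ} {A : H →ₗ[ℂ] H} (hA : IsOp a e A)
    {f : H} {d : ℤ} (hf : degLE f d) : degLE (A f) (d + e) := by
  have h := hA.2 f d hf 0
  simpa using h

/-- For `(P,Q) ∈ Gr_𝒟` and `Ψ` the monic solution of `P·Ψ = 0`, the vectors
`Q^k·Ψ` have leading term `z^k`, their span lies in the big cell, and it is stabilized by
`P` and `Q`. -/
theorem distinguished_basis_span (P Q : H →ₗ[ℂ] H) (hPQ : GrD P Q)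
    (Psi : H) (hPsi1 : Psi - 1 ∈ Hminus) (hPsi2 : P Psi = 0) :
    (∀ k : ℕ, degLE ((Q ^ k) Psi - zH ^ k) ((k : ℤ) - 1)) ∧
    BigCell (Submodule.span ℂ (Set.range fun k : ℕ => (Q ^ k) Psi)) ∧
    Stab P (Submodule.span ℂ (Set.range fun k : ℕ => (Q ^ k) Psi)) ∧
    Stab Q (Submodule.span ℂ (Set.range fun k : ℕ => (Q ^ k) Psi)) := by
  obtain ⟨⟨a, hA⟩, ⟨b, hB⟩, hComm⟩ := hPQ
  set W := Submodule.span ℂ (Set.range fun k : ℕ => (Q ^ k) Psi) with hW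
  have hQsucc : ∀ (k : ℕ) (f : H), (Q ^ (k+1)) f = Q ((Q ^ k) f) := by
    intro k f; rw [pow_succ', Module.End.mul_apply]
  -- (i)
  have main1 : ∀ k : ℕ, degLE ((Q ^ k) Psi - zH ^ k) ((k : ℤ) - 1) := by
    intro k
    induction k with
    | zero =>
      intro j hj
      simp only [pow_zero, Module.End.one_apply]
      exact hPsi1 j (by omega)
    | succ k ih =>
      have hdeg : degLE ((Q ^ k) Psi) (k : ℤ) := by
        have h1 := degLE_mono ih (by omega : (k : ℤ) - 1 ≤ k)
        have h2 := degLE_add h1 (degLE_zH_pow k)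
        simpa using h2
      have hB' : degLE ((Q - Mz) ((Q ^ k) Psi)) ((k : ℤ) - 1) := by
        have := opBound hB hdeg
        exact degLE_mono this (by omega)
      have key : (Q ^ (k+1)) Psi - zH ^ (k+1)
          = zH * ((Q ^ k) Psi - zH ^ k) + (Q - Mz) ((Q ^ k) Psi) := by
        rw [hQsucc, pow_succ' zH k]
        simp only [LinearMap.sub_apply]
        rw [show Mz ((Q ^ k) Psi) = zH * ((Q ^ k) Psi) from rfl]
        ring
      rw [key]
      have hfin : degLE (zH * ((Q ^ k) Psi - zH ^ k) + (Q - Mz) ((Q ^ k) Psi)) (k : ℤ) := by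
        refine degLE_add (degLE_mono (degLE_zH_mul ih) (by omega)) (degLE_mono hB' (by omega))
      exact degLE_mono hfin (by push_cast; omega)
  have hdegQ : ∀ k : ℕ, degLE ((Q ^ k) Psi) (k : ℤ) := by
    intro k
    have h1 := degLE_mono (main1 k) (by omega : (k : ℤ) - 1 ≤ k)
    have h2 := degLE_add h1 (degLE_zH_pow k)
    simpa using h2
  have hlead : ∀ k : ℕ, zc ((Q ^ k) Psi) (k : ℤ) = 1 := by
    intro k
    have h : (Q ^ k) Psi = ((Q ^ k) Psi - zH ^ k) + zH ^ k := by ring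
    rw [h, zc_add, main1 k _ (by omega), zc_zH_pow, if_pos rfl, zero_add]
  have hgen : ∀ k : ℕ, (Q ^ k) Psi ∈ W := fun k => Submodule.subset_span ⟨k, rfl⟩
  -- stabilization
  have stab_of : ∀ (A : H →ₗ[ℂ] H), (∀ k : ℕ, A ((Q ^ k) Psi) ∈ W) → Stab A W := by
    intro A h f hf
    have hle : W ≤ Submodule.comap A W := by
      rw [hW]
      apply Submodule.span_le.mpr
      rintro x ⟨k, rfl⟩
      exact h k
    exact hle hf
  have stabQ : Stab Q W := by
    refine stab_of Q (fun k => ?_)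
    rw [← hQsucc]
    exact hgen (k+1)
  have hPcomm : ∀ f : H, P (Q f) = Q (P f) + f := by
    intro f
    have h := LinearMap.congr_fun hComm f
    simp only [LinearMap.sub_apply, LinearMap.comp_apply, LinearMap.id_apply] at h
    linear_combination h
  have stabP : Stab P W := by
    refine stab_of P (fun k => ?_)
    induction k with
    | zero =>
      simp only [pow_zero, Module.End.one_apply, hPsi2]
      exact W.zero_mem
    | succ k ih =>
      rw [hQsucc, hPcomm]
      exact W.add_mem (stabQ _ ih) (hgen k)
  -- injectivity
  have hinj0 : ∀ c : ℕ →₀ ℂ, piPlus (c.sum fun k t => t • (Q ^ k) Psi) = 0 → c = 0 := by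
    intro c hc
    by_contra hc0
    have hne : c.support.Nonempty := Finsupp.support_nonempty_iff.mpr hc0
    set m := c.support.max' hne with hm
    have hcm : c m ≠ 0 := Finsupp.mem_support_iff.mp (c.support.max'_mem hne)
    have hzc : zc (c.sum fun k t => t • (Q ^ k) Psi) (m : ℤ) = c m := by
      rw [Finsupp.sum, zc_finsum, Finset.sum_eq_single m]
      · rw [zc_smul, hlead m, mul_one]
      · intro k hk hkm
        have hklt : k < m := lt_of_le_of_ne (Finset.le_max' _ _ hk) hkm
        rw [zc_smul, hdegQ k (m : ℤ) (by exact_mod_cast hklt), mul_zero]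
      · intro h; exact absurd (c.support.max'_mem hne) h
    have h2 : zc (piPlus (c.sum fun k t => t • (Q ^ k) Psi)) (m : ℤ) = c m := by
      rw [zc_piPlus, if_neg (by omega), hzc]
    rw [hc, zc_zero] at h2
    exact hcm h2.symm
  -- surjectivity
  have surj_aux : ∀ n : ℕ, ∀ p : H, p ∈ Hplus → degLE p ((n : ℤ) - 1) →
      ∃ w ∈ W, piPlus w = p := by
    intro n
    induction n with
    | zero =>
      intro p hp hdp
      refine ⟨0, W.zero_mem, ?_⟩
      rw [map_zero]
      have hp0 : p = 0 := by
        ext nn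
        have h : zc p (-nn) = 0 := by
          by_cases h : -nn < 0
          · exact hp _ h
          · exact hdp _ (by omega)
        simpa [zc] using h
      rw [hp0]
    | succ n ih =>
      intro p hp hdp
      set c := zc p (n : ℤ) with hcdef
      have hp' : p - c • piPlus ((Q ^ n) Psi) ∈ Hplus :=
        Hplus.sub_mem hp (Hplus.smul_mem _ (piPlus_mem_Hplus _))
      have hd' : degLE (p - c • piPlus ((Q ^ n) Psi)) ((n : ℤ) - 1) := by
        intro k hk
        rw [zc_sub, zc_smul, zc_piPlus, if_neg (by omega)]
        by_cases h : (n : ℤ) < k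
        · rw [hdp k (by push_cast; omega), hdegQ n k h, mul_zero, sub_zero]
        · have hkn : k = (n : ℤ) := by omega
          rw [hkn, hlead n, mul_one, ← hcdef, sub_self]
      obtain ⟨w, hw, hww⟩ := ih _ hp' hd'
      refine ⟨w + c • (Q ^ n) Psi, W.add_mem hw (W.smul_mem _ (hgen n)), ?_⟩
      rw [map_add, map_smul, hww]
      ring
  refine ⟨main1, ⟨?_, ?_, ?_⟩, stabP, stabQ⟩
  · intro f _
    exact piPlus_mem_Hplus f
  · intro f hf g hg hfg
    by_contra hne
    have hsub : f - g ∈ W := W.sub_mem hf hg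
    rw [hW] at hsub
    obtain ⟨c, hcs⟩ := Finsupp.mem_span_range_iff_exists_finsupp.mp hsub
    have h0 : piPlus (f - g) = 0 := by rw [map_sub, hfg, sub_self]
    have hc0 : c = 0 := hinj0 c (by rw [hcs, h0])
    rw [hc0, Finsupp.sum_zero_index] at hcs
    exact hne (sub_eq_zero.mp hcs.symm)
  · intro p hp
    have hp' : p ∈ Hplus := hp
    by_cases hp0 : p = 0
    · obtain ⟨w, hw, hww⟩ := surj_aux 0 p hp' (by intro k hk; rw [hp0, zc_zero])
      exact ⟨w, hw, hww⟩
    · have horder : p.order ≤ 0 := by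
        by_contra hlt
        push_neg at hlt
        have hco := mt HahnSeries.coeff_order_eq_zero.mp hp0
        have := hp' (-p.order) (by omega)
        rw [zc, neg_neg] at this
        exact hco this
      have hn : ((1 - p.order).toNat : ℤ) = 1 - p.order := Int.toNat_of_nonneg (by omega)
      obtain ⟨w, hw, hww⟩ := surj_aux (1 - p.order).toNat p hp' (by
        intro k hk
        rw [hn] at hk
        rw [zc]
        exact HahnSeries.coeff_eq_zero_of_lt_order (by omega))
      exact ⟨w, hw, hww⟩
end
end

section
/- Fix ħ ∈ ℂ. On H = ℂ((z⁻¹)) define the ℂ-linear operators W := z⁻¹·(d/dz) − 1/(2z²), W₁ := (1/2)·M_z∘W∘W + W∘(d/dz) (explicitly W₁ = 5/(8z³) − (3/(2z²))·d/dz + (3/(2z))·d²/dz²), W₂ := (1/2)·W∘W∘W, and the canonical Kac–Schwarz operators of the Kontsevich–Witten model Q := M_z + ħ·W and P := d/dz + (ħ/2)·W∘W. Define operators G^{(k)} recursively by G^{(0)} := id, G^{(−1)} := 0 and G^{(k)} := (1/(3k))·(ħ·W₁∘G^{(k−1)} + ħ²·W₂∘G^{(k−2)}) for k ≥ 1. Then: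 (i) for every polynomial p ∈ ℂ[z], the Laurent series G^{(k)}·p has z-degree ≤ deg p − 3k, so the sum G·p := Σ_{k≥0} G^{(k)}·p is a well-defined element of ℂ((z⁻¹)); and (ii) Q·(P·(G·p)) = G·(z·p') for every p ∈ ℂ[z], i.e. Q∘P∘G = G∘(z·d/dz) as maps on ℂ[z]. (Thus the homogeneous components of Sato's group element of the Kontsevich–Witten tau-function satisfy the three-term recursion G^{(k)} = (ħW₁G^{(k−1)} + ħ²W₂G^{(k−2)})/(3k).) -/
noncomputable section

/-- The operator `W = z⁻¹ d/dz - 1/(2z²)`. -/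
def Wop : H →ₗ[ℂ] H where
  toFun f := HahnSeries.single (1 : ℤ) (1 : ℂ) * Dz f
    - (1 / 2 : ℂ) • (HahnSeries.single (2 : ℤ) (1 : ℂ) * f)
  map_add' f g := by
    simp only [map_add, mul_add, smul_add]
    ring
  map_smul' c f := by
    show HahnSeries.single (1 : ℤ) (1 : ℂ) * Dz (c • f)
        - (1 / 2 : ℂ) • (HahnSeries.single (2 : ℤ) (1 : ℂ) * (c • f)) = _
    rw [map_smul]
    simp only [RingHom.id_apply, ← HahnSeries.single_zero_mul_eq_smul]
    ring

/-- `W₁ = (1/2) M_z W² + W d/dz`. -/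
def W1op : H →ₗ[ℂ] H := (1 / 2 : ℂ) • (Mz ∘ₗ Wop ∘ₗ Wop) + Wop ∘ₗ Dz

/-- `W₂ = (1/2) W³`. -/
def W2op : H →ₗ[ℂ] H := (1 / 2 : ℂ) • (Wop ∘ₗ Wop ∘ₗ Wop)

/-- The recursively defined homogeneous components `G^{(k)}` of Sato's group element of the
Kontsevich–Witten tau-function: `G^{(0)} = id`, `G^{(-1)} = 0`,
`G^{(k)} = (ħ W₁ G^{(k-1)} + ħ² W₂ G^{(k-2)})/(3k)`. -/
def Gsato (h : ℂ) : ℕ → (H →ₗ[ℂ] H)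
  | 0 => LinearMap.id
  | 1 => (1 / 3 : ℂ) • (h • (W1op ∘ₗ Gsato h 0))
  | (k + 2) =>
      (1 / (3 * ((k : ℂ) + 2))) •
        (h • (W1op ∘ₗ Gsato h (k + 1)) + (h ^ 2) • (W2op ∘ₗ Gsato h k))

/-! ### Auxiliary development -/

section Aux

open HahnSeries

/-- Multiplication by `single a c` as a linear endomorphism. -/
def mS (a : ℤ) (c : ℂ) : H →ₗ[ℂ] H where
  toFun f := HahnSeries.single a c * f
  map_add' f g := mul_add _ f g
  map_smul' r f := by
    ext n
    simp only [RingHom.id_apply, HahnSeries.coeff_smul]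
    have h1 := HahnSeries.coeff_single_mul_add (r := c) (x := r • f) (a := n - a) (b := a)
    have h2 := HahnSeries.coeff_single_mul_add (r := c) (x := f) (a := n - a) (b := a)
    rw [sub_add_cancel] at h1 h2
    rw [h1, h2, HahnSeries.coeff_smul, smul_eq_mul, smul_eq_mul]
    ring

lemma mS_coeff (a : ℤ) (c : ℂ) (f : H) (n : ℤ) :
    (mS a c f).coeff n = c * f.coeff (n - a) := by
  show (HahnSeries.single a c * f).coeff n = _
  have := HahnSeries.coeff_single_mul_add (r := c) (x := f) (a := n - a) (b := a)
  rwa [sub_add_cancel] at this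

lemma Dz_coeff (f : H) (n : ℤ) : (Dz f).coeff n = ((1 - n : ℤ) : ℂ) * f.coeff (n - 1) := rfl

lemma Mz_eq : Mz = mS (-1) 1 := by ext f : 1; rfl

lemma Mz_coeff (f : H) (n : ℤ) : (Mz f).coeff n = f.coeff (n + 1) := by
  rw [Mz_eq, mS_coeff]; norm_num

lemma Wop_eq : Wop = mS 1 1 ∘ₗ Dz - (1 / 2 : ℂ) • mS 2 1 := by ext f : 1; rfl

end Aux
section Aux2

lemma degLE_mono_s14 {f : H} {d e : ℤ} (hf : degLE f d) (hde : d ≤ e) : degLE f e :=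
  fun k hk => hf k (lt_of_le_of_lt hde hk)

lemma degLE_neg {f : H} {d : ℤ} (hf : degLE f d) : degLE (-f) d := by
  intro k hk
  show (-f).coeff (-k) = 0
  rw [HahnSeries.coeff_neg]
  have := hf k hk
  simp only [zc] at this
  rw [this, neg_zero]

lemma degLE_sub {f g : H} {d : ℤ} (hf : degLE f d) (hg : degLE g d) : degLE (f - g) d := by
  rw [sub_eq_add_neg]; exact degLE_add hf (degLE_neg hg)

lemma degLE_zero (d : ℤ) : degLE (0 : H) d := by intro k _; simp [zc]

lemma degLE_sum {α : Type*} {s : Finset α} {F : α → H} {d : ℤ}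
    (hF : ∀ a ∈ s, degLE (F a) d) : degLE (∑ a ∈ s, F a) d := by
  classical
  induction s using Finset.induction_on with
  | empty => simpa using degLE_zero d
  | insert _ _ hx ih =>
    rw [Finset.sum_insert hx]
    exact degLE_add (hF _ (Finset.mem_insert_self _ _))
      (ih fun a ha => hF a (Finset.mem_insert_of_mem ha))

lemma degLE_mS {f : H} {d : ℤ} (a : ℤ) (c : ℂ) (hf : degLE f d) : degLE (mS a c f) (d - a) := by
  intro k hk
  show (mS a c f).coeff (-k) = 0
  rw [mS_coeff]
  have : f.coeff (-(k + a)) = 0 := hf (k + a) (by omega)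
  rw [show -k - a = -(k + a) by ring, this, mul_zero]

lemma degLE_Dz {f : H} {d : ℤ} (hf : degLE f d) : degLE (Dz f) (d - 1) := by
  intro k hk
  show (Dz f).coeff (-k) = 0
  rw [Dz_coeff]
  have : f.coeff (-(k + 1)) = 0 := hf (k + 1) (by omega)
  rw [show -k - 1 = -(k + 1) by ring, this, mul_zero]

lemma degLE_Mz {f : H} {d : ℤ} (hf : degLE f d) : degLE (Mz f) (d + 1) := by
  rw [Mz_eq]
  have := degLE_mS (-1) 1 hf
  rwa [sub_neg_eq_add] at this

lemma degLE_W {f : H} {d : ℤ} (hf : degLE f d) : degLE (Wop f) (d - 2) := by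
  rw [Wop_eq]
  show degLE (mS 1 1 (Dz f) - (1/2 : ℂ) • mS 2 1 f) (d - 2)
  refine degLE_sub ?_ (degLE_smul _ ?_)
  · have := degLE_mS 1 1 (degLE_Dz hf)
    rwa [show d - 1 - 1 = d - 2 by ring] at this
  · exact degLE_mS 2 1 hf

lemma degLE_W1 {f : H} {d : ℤ} (hf : degLE f d) : degLE (W1op f) (d - 3) := by
  show degLE ((1/2 : ℂ) • (Mz (Wop (Wop f))) + Wop (Dz f)) (d - 3)
  refine degLE_add (degLE_smul _ ?_) ?_
  · have := degLE_Mz (degLE_W (degLE_W hf))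
    rwa [show d - 2 - 2 + 1 = d - 3 by ring] at this
  · have := degLE_W (degLE_Dz hf)
    rwa [show d - 1 - 2 = d - 3 by ring] at this

lemma degLE_W2 {f : H} {d : ℤ} (hf : degLE f d) : degLE (W2op f) (d - 6) := by
  show degLE ((1/2 : ℂ) • (Wop (Wop (Wop f)))) (d - 6)
  refine degLE_smul _ ?_
  have := degLE_W (degLE_W (degLE_W hf))
  rwa [show d - 2 - 2 - 2 = d - 6 by ring] at this

lemma degLE_Gsato (h : ℂ) : ∀ (k : ℕ) {f : H} {d : ℤ},
    degLE f d → degLE (Gsato h k f) (d - 3 * k)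
  | 0, f, d, hf => by show degLE f (d - 3 * ((0 : ℕ) : ℤ)); simpa using hf
  | 1, f, d, hf => by
      show degLE ((1/3 : ℂ) • (h • (W1op (Gsato h 0 f)))) (d - 3 * 1)
      refine degLE_smul _ (degLE_smul _ ?_)
      have := degLE_W1 (degLE_Gsato h 0 hf)
      simpa using this
  | (k + 2), f, d, hf => by
      show degLE ((1 / (3 * ((k : ℂ) + 2))) •
        (h • (W1op (Gsato h (k+1) f)) + (h^2) • (W2op (Gsato h k f)))) (d - 3 * (k+2))
      refine degLE_smul _ (degLE_add (degLE_smul _ ?_) (degLE_smul _ ?_))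
      · have := degLE_W1 (degLE_Gsato h (k+1) hf)
        have he : d - 3 * ((k:ℤ)+1) - 3 = d - 3 * ((k:ℤ)+2) := by ring
        rw [show ((k:ℤ)+1) = ((k+1 : ℕ) : ℤ) by push_cast; ring] at he
        rw [show ((k:ℤ)+2) = ((k+2 : ℕ) : ℤ) by push_cast; ring] at he
        rwa [he] at this
      · have := degLE_W2 (degLE_Gsato h k hf)
        have he : d - 3 * (k:ℤ) - 6 = d - 3 * ((k:ℤ)+2) := by ring
        rw [show ((k:ℤ)+2) = ((k+2 : ℕ) : ℤ) by push_cast; ring] at he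
        rwa [he] at this

lemma degLE_order (f : H) : degLE f (-f.order) := by
  intro k hk
  show f.coeff (-k) = 0
  exact HahnSeries.coeff_eq_zero_of_lt_order (by omega)

end Aux2
section Aux3

/-- The Euler operator `E = z d/dz`. -/
def Eop : H →ₗ[ℂ] H := Mz ∘ₗ Dz

lemma Eop_coeff (f : H) (n : ℤ) : (Eop f).coeff n = ((-n : ℤ) : ℂ) * f.coeff n := by
  show (Mz (Dz f)).coeff n = _
  rw [Mz_coeff, Dz_coeff]
  push_cast
  ring_nf

lemma Eop_apply (f : H) : Eop f = zH * Dz f := rfl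

lemma degLE_Eop {f : H} {d : ℤ} (hf : degLE f d) : degLE (Eop f) d := by
  intro k hk
  show (Eop f).coeff (-k) = 0
  rw [Eop_coeff]
  have := hf k hk
  simp only [zc] at this
  rw [this, mul_zero]

/-- `A` is homogeneous of degree `r` (in the `z`-grading). -/
def hdeg (A : H →ₗ[ℂ] H) (r : ℤ) : Prop :=
  ∀ f, Eop (A f) = A (Eop f) + (r : ℂ) • A f

lemma Gsato_zero (h : ℂ) : Gsato h 0 = LinearMap.id := rfl
lemma Gsato_one (h : ℂ) : Gsato h 1 = (1 / 3 : ℂ) • (h • (W1op ∘ₗ Gsato h 0)) := rfl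
lemma Gsato_succ (h : ℂ) (k : ℕ) : Gsato h (k + 2) =
    (1 / (3 * ((k : ℂ) + 2))) •
      (h • (W1op ∘ₗ Gsato h (k + 1)) + (h ^ 2) • (W2op ∘ₗ Gsato h k)) := rfl

lemma hdeg_id : hdeg LinearMap.id 0 := by
  intro f
  ext n
  simp [HahnSeries.coeff_add, HahnSeries.coeff_smul]

lemma hdeg_comp {A B : H →ₗ[ℂ] H} {r s : ℤ} (hA : hdeg A r) (hB : hdeg B s) :
    hdeg (A ∘ₗ B) (r + s) := by
  intro f
  simp only [LinearMap.comp_apply]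
  rw [hA, hB, map_add, map_smul]
  push_cast
  module

lemma hdeg_smul {A : H →ₗ[ℂ] H} {r : ℤ} (c : ℂ) (hA : hdeg A r) : hdeg (c • A) r := by
  intro f
  simp only [LinearMap.smul_apply]
  rw [map_smul, hA]
  module

lemma hdeg_add {A B : H →ₗ[ℂ] H} {r : ℤ} (hA : hdeg A r) (hB : hdeg B r) :
    hdeg (A + B) r := by
  intro f
  simp only [LinearMap.add_apply]
  rw [map_add, hA, hB]
  module

lemma hdeg_sub {A B : H →ₗ[ℂ] H} {r : ℤ} (hA : hdeg A r) (hB : hdeg B r) :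
    hdeg (A - B) r := by
  intro f
  simp only [LinearMap.sub_apply]
  rw [map_sub, hA, hB]
  module

lemma hdeg_mS (a : ℤ) (c : ℂ) : hdeg (mS a c) (-a) := by
  intro f
  ext n
  simp only [HahnSeries.coeff_add, HahnSeries.coeff_smul, Eop_coeff, mS_coeff, smul_eq_mul]
  push_cast
  ring

lemma hdeg_Dz : hdeg Dz (-1) := by
  intro f
  ext n
  simp only [HahnSeries.coeff_add, HahnSeries.coeff_smul, Eop_coeff, Dz_coeff, smul_eq_mul]
  push_cast
  ring

lemma hdeg_Mz : hdeg Mz 1 := by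
  rw [Mz_eq]
  simpa using hdeg_mS (-1) 1

lemma hdeg_W : hdeg Wop (-2) := by
  rw [Wop_eq]
  have h1 : hdeg (mS 1 1 ∘ₗ Dz) (-2) := by
    have := hdeg_comp (hdeg_mS 1 1) hdeg_Dz
    simpa using this
  have h2 : hdeg ((1/2 : ℂ) • mS 2 1) (-2) := hdeg_smul _ (hdeg_mS 2 1)
  exact hdeg_sub h1 h2

lemma hdeg_W1 : hdeg W1op (-3) := by
  unfold W1op
  refine hdeg_add (hdeg_smul _ ?_) ?_
  · have := hdeg_comp hdeg_Mz (hdeg_comp hdeg_W hdeg_W)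
    simpa using this
  · have := hdeg_comp hdeg_W hdeg_Dz
    simpa using this

lemma hdeg_W2 : hdeg W2op (-6) := by
  unfold W2op
  refine hdeg_smul _ ?_
  have := hdeg_comp hdeg_W (hdeg_comp hdeg_W hdeg_W)
  simpa using this

lemma hdeg_Gsato (h : ℂ) : ∀ k : ℕ, hdeg (Gsato h k) (-(3 * k))
  | 0 => by rw [Gsato_zero]; simpa using hdeg_id
  | 1 => by
      rw [Gsato_one]
      show hdeg _ (-(3 * ((1:ℕ) : ℤ)))
      refine hdeg_smul _ (hdeg_smul _ ?_)
      have := hdeg_comp hdeg_W1 (hdeg_Gsato h 0)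
      simpa using this
  | (k + 2) => by
      rw [Gsato_succ]
      refine hdeg_smul _ (hdeg_add (hdeg_smul _ ?_) (hdeg_smul _ ?_))
      · have := hdeg_comp hdeg_W1 (hdeg_Gsato h (k+1))
        have he : (-3 : ℤ) + -(3 * ((k+1 : ℕ) : ℤ)) = -(3 * ((k+2 : ℕ) : ℤ)) := by
          push_cast; ring
        rwa [he] at this
      · have := hdeg_comp hdeg_W2 (hdeg_Gsato h k)
        have he : (-6 : ℤ) + -(3 * ((k : ℕ) : ℤ)) = -(3 * ((k+2 : ℕ) : ℤ)) := by
          push_cast; ring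
        rwa [he] at this

end Aux3
section Aux4

lemma coeff_sum {α : Type*} (s : Finset α) (F : α → H) (n : ℤ) :
    (∑ a ∈ s, F a).coeff n = ∑ a ∈ s, (F a).coeff n := by
  classical
  induction s using Finset.induction_on with
  | empty => simp
  | insert _ _ hx ih =>
    rw [Finset.sum_insert hx, Finset.sum_insert hx, HahnSeries.coeff_add, ih]

lemma Gsato_rec0 (h : ℂ) (f : H) :
    (3 : ℂ) • Gsato h 1 f = h • W1op (Gsato h 0 f) := by
  rw [Gsato_one]
  simp only [LinearMap.smul_apply, LinearMap.comp_apply]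
  module

lemma Gsato_recS (h : ℂ) (k : ℕ) (f : H) :
    (3 * ((k : ℂ) + 2)) • Gsato h (k + 2) f =
      h • W1op (Gsato h (k + 1) f) + h ^ 2 • W2op (Gsato h k f) := by
  rw [Gsato_succ]
  have hne : (3 * ((k : ℂ) + 2)) ≠ 0 := by
    refine mul_ne_zero (by norm_num) ?_
    intro hc
    have h0 : ((k + 2 : ℕ) : ℂ) = 0 := by push_cast; exact hc
    exact (by omega : (k + 2 : ℕ) ≠ 0) (Nat.cast_eq_zero.mp h0)
  simp only [LinearMap.smul_apply, LinearMap.add_apply, LinearMap.comp_apply]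
  rw [smul_smul]
  rw [mul_one_div, div_self hne, one_smul]

/-- The term `-3k G^{(k)}f + ħ W₁ G^{(k)}f + ħ² W₂ G^{(k)}f`. -/
def aterm (h : ℂ) (f : H) (k : ℕ) : H :=
  (-(3 * (k : ℂ))) • Gsato h k f + h • W1op (Gsato h k f) + h ^ 2 • W2op (Gsato h k f)

lemma sum_aterm (h : ℂ) (f : H) : ∀ N : ℕ,
    ∑ k ∈ Finset.range (N + 1), aterm h f k =
      (3 * ((N : ℂ) + 1)) • Gsato h (N + 1) f + h ^ 2 • W2op (Gsato h N f)
  | 0 => by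
      rw [Finset.sum_range_one]
      unfold aterm
      rw [← Gsato_rec0]
      simp only [Nat.cast_zero, zero_add]
      module
  | (N + 1) => by
      rw [Finset.sum_range_succ, sum_aterm h f N]
      have hr : h • W1op (Gsato h (N + 1) f) =
          (3 * ((N : ℂ) + 2)) • Gsato h (N + 2) f - h ^ 2 • W2op (Gsato h N f) := by
        rw [eq_sub_iff_add_eq]
        exact (Gsato_recS h N f).symm
      unfold aterm
      rw [hr]
      push_cast
      module

lemma degLE_sum_aterm (h : ℂ) {f : H} {d : ℤ} (hf : degLE f d) (N : ℕ) :
    degLE (∑ k ∈ Finset.range N, aterm h f k) (d - 3 * N) := by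
  cases N with
  | zero => simpa using degLE_zero d
  | succ N =>
    rw [sum_aterm h f N]
    refine degLE_add ?_ ?_
    · have := degLE_smul (3 * ((N : ℂ) + 1)) (degLE_Gsato h (N + 1) hf)
      refine degLE_mono_s14 this (by push_cast; omega)
    · have := degLE_smul (h ^ 2) (degLE_W2 (degLE_Gsato h N hf))
      refine degLE_mono_s14 this (by push_cast; omega)

/-- Cutoff index for the coefficient of the infinite sum. -/
def Kb (f : H) (n : ℤ) : ℕ := ((-f.order + n).toNat / 3) + 1

lemma Kb_spec {f : H} {n : ℤ} {k : ℕ} (hk : Kb f n ≤ k) : (-f.order : ℤ) + n < 3 * k := by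
  unfold Kb at hk
  have h1 : -f.order + n ≤ (((-f.order + n).toNat : ℕ) : ℤ) := Int.self_le_toNat _
  have h2 := Nat.div_add_mod ((-f.order + n).toNat) 3
  have h3 := Nat.mod_lt ((-f.order + n).toNat) (show 0 < 3 by norm_num)
  omega

lemma Gterm_zero (h : ℂ) {f : H} {n : ℤ} {k : ℕ} (hk : (-f.order : ℤ) + n < 3 * k) :
    (Gsato h k f).coeff n = 0 := by
  have h1 := degLE_Gsato h k (degLE_order f) (-n) (by omega)
  simpa [zc] using h1

/-- The operator `G = Σ_k G^{(k)}`, defined coefficientwise. -/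
def Gfun (h : ℂ) (f : H) : H :=
  { coeff := fun n => ∑ k ∈ Finset.range (Kb f n), (Gsato h k f).coeff n
    isPWO_support' := by
      refine Set.IsPWO.mono
        ((Set.IsWF.isPWO (BddBelow.wellFoundedOn_lt (bddBelow_Ici (a := f.order))))) ?_
      intro n hn
      simp only [Function.mem_support] at hn
      obtain ⟨k, _, hk⟩ := Finset.exists_ne_zero_of_sum_ne_zero hn
      by_contra hcon
      simp only [Set.mem_Ici, not_le] at hcon
      exact hk (Gterm_zero h (by omega)) }

lemma Gfun_coeff (h : ℂ) (f : H) (n : ℤ) {M : ℕ} (hM : Kb f n ≤ M) :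
    (Gfun h f).coeff n = ∑ k ∈ Finset.range M, (Gsato h k f).coeff n := by
  show ∑ k ∈ Finset.range (Kb f n), (Gsato h k f).coeff n = _
  refine Finset.sum_subset (Finset.range_subset_range.mpr hM) ?_
  intro k _ hk
  simp only [Finset.mem_range, not_lt] at hk
  exact Gterm_zero h (Kb_spec hk)

lemma Gfun_conv (h : ℂ) {f : H} {d : ℤ} (hf : degLE f d) (N : ℕ) :
    degLE (Gfun h f - ∑ k ∈ Finset.range N, Gsato h k f) (d - 3 * N) := by
  intro m hm
  show (Gfun h f - ∑ k ∈ Finset.range N, Gsato h k f).coeff (-m) = 0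
  rw [HahnSeries.coeff_sub, coeff_sum]
  have hM : Kb f (-m) ≤ max N (Kb f (-m)) := le_max_right _ _
  rw [Gfun_coeff h f (-m) hM]
  rw [← Finset.sum_Ico_eq_sub _ (le_max_left N _)]
  refine Finset.sum_eq_zero ?_
  intro k hk
  simp only [Finset.mem_Ico] at hk
  have h1 := degLE_Gsato h k hf (f := f)
  refine h1 m ?_
  have : (N : ℤ) ≤ (k : ℤ) := by exact_mod_cast hk.1
  omega

lemma QP_apply (h : ℂ) (f : H) :
    (Mz + h • Wop) ((Dz + (h / 2) • (Wop ∘ₗ Wop)) f) =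
      Eop f + h • W1op f + h ^ 2 • W2op f := by
  have hW1 : W1op f = (1/2 : ℂ) • Mz (Wop (Wop f)) + Wop (Dz f) := rfl
  have hW2 : W2op f = (1/2 : ℂ) • Wop (Wop (Wop f)) := rfl
  have hE : Eop f = Mz (Dz f) := rfl
  simp only [LinearMap.add_apply, LinearMap.smul_apply, LinearMap.comp_apply,
    map_add, map_smul, hW1, hW2, hE]
  module

end Aux4

/-- The components `G^{(k)}` lower the degree of polynomials by `3k`, so
`G = Σ_k G^{(k)}` is well defined on `ℂ[z]`, and it satisfies `Q∘P∘G = G∘(z·d/dz)` on `ℂ[z]`,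
where `Q = M_z + ħW` and `P = d/dz + (ħ/2)W²` are the canonical Kac–Schwarz operators of the
Kontsevich–Witten model. -/
theorem KW_sato_recursion (h : ℂ) :
    (∀ (k : ℕ), ∀ p ∈ Hplus, ∀ d : ℤ, degLE p d → degLE ((Gsato h k) p) (d - 3 * k)) ∧
    ∃ G : H → H,
      (∀ p ∈ Hplus, ∀ d : ℤ, degLE p d → ∀ N : ℕ,
        degLE (G p - ∑ k ∈ Finset.range N, (Gsato h k) p) (d - 3 * N)) ∧
      (∀ p ∈ Hplus,
        (Mz + h • Wop) ((Dz + (h / 2) • (Wop ∘ₗ Wop)) (G p)) = G (zH * Dz p)) := by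
  refine ⟨fun k p _ d hd => degLE_Gsato h k hd, Gfun h, fun p _ d hd N => Gfun_conv h hd N, ?_⟩
  intro p _
  rw [← Eop_apply]
  have hpd : degLE p (-p.order) := degLE_order p
  set d : ℤ := -p.order with hd
  ext n
  set m : ℤ := -n with hm
  have hn : n = -m := by omega
  set q : ℕ := (d - m).toNat with hq
  have hq1 : d - m ≤ (q : ℤ) := Int.self_le_toNat _
  set N : ℕ := q + 1 with hN
  have hmN : d - 3 * (N : ℤ) < m := by
    have : (N : ℤ) = (q : ℤ) + 1 := by exact_mod_cast hN
    omega
  set S : H := ∑ k ∈ Finset.range N, Gsato h k p with hS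
  have ht : degLE (Gfun h p - S) (d - 3 * N) := Gfun_conv h hpd N
  have hGsplit : Gfun h p = S + (Gfun h p - S) := by ring
  rw [QP_apply, hGsplit]
  set t : H := Gfun h p - S with htdef
  have hexp : Eop (S + t) + h • W1op (S + t) + h ^ 2 • W2op (S + t)
      = (Eop S + h • W1op S + h ^ 2 • W2op S)
        + (Eop t + h • W1op t + h ^ 2 • W2op t) := by
    rw [map_add, map_add, map_add, smul_add, smul_add]
    abel
  rw [hexp]
  have hsum : Eop S + h • W1op S + h ^ 2 • W2op S
      = ∑ k ∈ Finset.range N, Gsato h k (Eop p) + ∑ k ∈ Finset.range N, aterm h p k := by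
    rw [hS, map_sum, map_sum, map_sum, Finset.smul_sum, Finset.smul_sum,
      ← Finset.sum_add_distrib, ← Finset.sum_add_distrib, ← Finset.sum_add_distrib]
    refine Finset.sum_congr rfl ?_
    intro k _
    rw [hdeg_Gsato h k p]
    unfold aterm
    push_cast
    module
  rw [hsum]
  have hT : degLE (Eop t + h • W1op t + h ^ 2 • W2op t) (d - 3 * N) := by
    refine degLE_add (degLE_add (degLE_Eop ht) ?_) ?_
    · exact degLE_mono_s14 (degLE_smul h (degLE_W1 ht)) (by omega)
    · exact degLE_mono_s14 (degLE_smul (h ^ 2) (degLE_W2 ht)) (by omega)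
  have hA : degLE (∑ k ∈ Finset.range N, aterm h p k) (d - 3 * N) :=
    degLE_sum_aterm h hpd N
  have hR : degLE (Gfun h (Eop p) - ∑ k ∈ Finset.range N, Gsato h k (Eop p)) (d - 3 * N) :=
    Gfun_conv h (degLE_Eop hpd) N
  have z1 : (∑ k ∈ Finset.range N, aterm h p k).coeff n = 0 := by
    rw [hn]; exact hA m hmN
  have z2 : (Eop t + h • W1op t + h ^ 2 • W2op t).coeff n = 0 := by
    rw [hn]; exact hT m hmN
  have z3 : (Gfun h (Eop p)).coeff n
      = (∑ k ∈ Finset.range N, Gsato h k (Eop p)).coeff n := by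
    have h3 := hR m hmN
    have h4 : (Gfun h (Eop p) - ∑ k ∈ Finset.range N, Gsato h k (Eop p)).coeff (-m) = 0 := h3
    rw [HahnSeries.coeff_sub] at h4
    rw [hn]
    exact sub_eq_zero.mp h4
  rw [HahnSeries.coeff_add, HahnSeries.coeff_add, z1, z2, add_zero, add_zero, z3]
end
end
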